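/- Let ℙ be a Bernoulli measure on ∂M, let a ∈ Σ, and let M′ₐ be the submonoid of M consisting of heaps with no occurrence of a. Then the three series Σ_{x∈M′ₐ} ℙ(↑x), Σ_{x∈M′ₐ} |x|·ℙ(↑x) and Σ_{x∈M′ₐ} |x|²·ℙ(↑x) are all finite. -/

import Mathlib

open MeasureTheory Filter
open scoped ENNReal NNReal

namespace HeapPaper

variable {S : Type}

/-- Commutation pairs of words, generating the trace congruence. -/
def CommRel (I : S → S → Prop) (w₁ w₂ : FreeMonoid S) : Prop :=
  ∃ a b : S, I a b ∧ w₁ = FreeMonoid.of a * FreeMonoid.of b ∧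
    w₂ = FreeMonoid.of b * FreeMonoid.of a

/-- The congruence on the free monoid generated by the commutation of independent pieces. -/
def HeapCon (I : S → S → Prop) : Con (FreeMonoid S) := conGen (CommRel I)

/-- The heap monoid `M(Σ, I)`:  the presented monoid `⟨Σ | ab = ba, (a,b) ∈ I⟩`. -/
def Heap (I : S → S → Prop) := (HeapCon I).Quotient

instance (I : S → S → Prop) : Monoid (Heap I) :=
  inferInstanceAs (Monoid (HeapCon I).Quotient)

/-- The unique additive extension to heaps of a function `φ` defined on pieces. -/
def addExt {A : Type} [AddCommMonoid A] {I : S → S → Prop} (φ : S → A) : Heap I → A :=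
  fun x => Multiplicative.toAdd <|
    (Con.lift (HeapCon I) (FreeMonoid.lift fun a => Multiplicative.ofAdd (φ a))
      (Con.conGen_le.mpr (by
        rintro w₁ w₂ ⟨a, b, hab, rfl, rfl⟩
        exact (Con.ker_rel _).mpr (by simp [map_mul, mul_comm])))) x

/-- The length `|x|` of a heap: the common length of its representative words. -/
def len {I : S → S → Prop} (x : Heap I) : ℕ := addExt (fun _ => 1) x

/-- The number `|x|ₐ` of occurrences of the piece `a` in the heap `x`. -/
def occ {I : S → S → Prop} [DecidableEq S] (a : S) (x : Heap I) : ℕ :=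
  addExt (fun b => if b = a then 1 else 0) x

/-- The additive extension `⟨φ, x⟩` of a real-valued cost function. -/
def pairing {I : S → S → Prop} (φ : S → ℝ) (x : Heap I) : ℝ := addExt φ x

/-- The left-divisibility order on the heap monoid. -/
def hLe {I : S → S → Prop} (x y : Heap I) : Prop := ∃ z : Heap I, y = x * z

/-- Cliques: finite sets of pairwise independent pieces. -/
def Cl (I : S → S → Prop) := {s : Finset S // ∀ a ∈ s, ∀ b ∈ s, a ≠ b → I a b}

/-- The empty clique. -/
def emptyCl (I : S → S → Prop) : Cl I := ⟨∅, by simp⟩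

/-- The heap associated with a clique (product of its pieces, in any order). -/
def Cl.heap {I : S → S → Prop} (γ : Cl I) : Heap I :=
  γ.1.noncommProd (fun a => (HeapCon I).mk' (FreeMonoid.of a)) (by
    intro a ha b hb hab
    have hI : I a b := γ.2 a ha b hb hab
    show (HeapCon I).mk' (FreeMonoid.of a) * (HeapCon I).mk' (FreeMonoid.of b)
        = (HeapCon I).mk' (FreeMonoid.of b) * (HeapCon I).mk' (FreeMonoid.of a)
    rw [← map_mul, ← map_mul]
    exact (Con.eq _).mpr (ConGen.Rel.of _ _ ⟨a, b, hI, rfl, rfl⟩))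

/-- The Cartier–Foata move relation `γ → γ'` between cliques. -/
def Move {I : S → S → Prop} (γ γ' : Cl I) : Prop :=
  ∀ b ∈ γ'.1, ∃ a ∈ γ.1, ¬ I a b

/-- The boundary `∂M`: infinite admissible sequences of nonempty cliques. -/
def Bnd (I : S → S → Prop) :=
  {ξ : ℕ → Cl I // (∀ n, (ξ n).1.Nonempty) ∧ ∀ n, Move (ξ n) (ξ (n + 1))}

/-- `M̄ = M ∪ ∂M`. -/
def MB (I : S → S → Prop) := Heap I ⊕ Bnd I

/-- Partial products of a sequence of cliques. -/
def ppSeq {I : S → S → Prop} (c : ℕ → Cl I) (n : ℕ) : Heap I :=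
  ((List.range n).map fun i => (c i).heap).prod

/-- `c` is the Cartier–Foata decomposition of the heap `x`, padded with empty cliques:
`c` is admissible, eventually empty, with partial products eventually equal to `x`. -/
def CFprop (I : S → S → Prop) (c : ℕ → Cl I) (x : Heap I) : Prop :=
  (∀ n, Move (c n) (c (n + 1))) ∧
    ∃ N, ∀ n, N ≤ n → ppSeq c n = x ∧ c n = emptyCl I

/-- The (padded) Cartier–Foata decomposition of a heap. -/
noncomputable def cf (I : S → S → Prop) (x : Heap I) : ℕ → Cl I :=
  letI := Classical.propDecidable (∃ c, CFprop I c x)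
  if h : ∃ c, CFprop I c x then h.choose else fun _ => emptyCl I

/-- The Cartier–Foata sequence of an element of `M̄`. -/
noncomputable def seqOf {I : S → S → Prop} : MB I → ℕ → Cl I
  | .inl x => cf I x
  | .inr ξ => ξ.1

/-- Partial products of the Cartier–Foata sequence of an element of `M̄`. -/
noncomputable def pp {I : S → S → Prop} (ζ : MB I) (n : ℕ) : Heap I :=
  ppSeq (seqOf ζ) n

/-- The order on `M̄`: `ξ ≤ ξ'` iff `γ₁⋯γₙ ≤ γ'₁⋯γ'ₙ` in `M` for all `n`. -/
noncomputable def mLe {I : S → S → Prop} (ζ ζ' : MB I) : Prop :=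
  ∀ n : ℕ, hLe (pp ζ n) (pp ζ' n)

/-- The elementary cylinder `↑x ⊆ ∂M` of base `x ∈ M`. -/
noncomputable def cyl {I : S → S → Prop} (x : Heap I) : Set (Bnd I) :=
  {ξ : Bnd I | mLe (.inl x) (.inr ξ)}

/-- The σ-algebra `𝔉` on `∂M` generated by the elementary cylinders. -/
noncomputable def Fsa (I : S → S → Prop) : MeasurableSpace (Bnd I) :=
  MeasurableSpace.generateFrom {A : Set (Bnd I) | ∃ x : Heap I, A = cyl x}

noncomputable instance (I : S → S → Prop) : MeasurableSpace (Bnd I) := Fsa I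

/-- `ζ` is the least upper bound in `M̄` of the nondecreasing sequence `(x·γ₁⋯γₙ)ₙ`,
where `(γₙ)` is the Cartier–Foata sequence of `ξ`; this characterizes `x·ξ`. -/
noncomputable def IsConc {I : S → S → Prop} (x : Heap I) (ξ : Bnd I) (ζ : MB I) : Prop :=
  (∀ n : ℕ, mLe (.inl (x * pp (.inr ξ) n)) ζ) ∧
    ∀ η : MB I, (∀ n : ℕ, mLe (.inl (x * pp (.inr ξ) n)) η) → mLe ζ η

/-- The concatenation `x·ξ ∈ ∂M` of a heap `x` and an infinite heap `ξ`. -/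
noncomputable def concB {I : S → S → Prop} (x : Heap I) (ξ : Bnd I) : Bnd I :=
  letI := Classical.propDecidable (∃ ζ : Bnd I, IsConc x ξ (.inr ζ))
  if h : ∃ ζ : Bnd I, IsConc x ξ (.inr ζ) then h.choose else ξ

/-- The difference `ξ − x`: the unique `ζ ∈ ∂M` with `x·ζ = ξ` (junk value if none exists). -/
noncomputable def subB {I : S → S → Prop} (ξ : Bnd I) (x : Heap I) : Bnd I :=
  letI := Classical.propDecidable (∃ ζ : Bnd I, concB x ζ = ξ)
  if h : ∃ ζ : Bnd I, concB x ζ = ξ then h.choose else ξ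

/-- Asynchronous stopping time. -/
noncomputable def IsAST {I : S → S → Prop} (V : Bnd I → MB I) : Prop :=
  (∀ ξ : Bnd I, mLe (V ξ) (.inr ξ)) ∧
    ∀ (ξ ξ' : Bnd I) (x : Heap I), V ξ = .inl x → mLe (.inl x) (.inr ξ') → V ξ' = V ξ

/-- The shift operator `θ_V` associated with an AST `V` (junk: identity outside its domain). -/
noncomputable def shiftV {I : S → S → Prop} (V : Bnd I → MB I) (ξ : Bnd I) : Bnd I :=
  match V ξ with
  | .inl x => subB ξ x
  | .inr _ => ξ

/-- The σ-algebra `𝔉_V` generated by the cylinders of the finite values of `V`. -/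
noncomputable def astSA {I : S → S → Prop} (V : Bnd I → MB I) : MeasurableSpace (Bnd I) :=
  MeasurableSpace.generateFrom
    {A : Set (Bnd I) | ∃ x : Heap I, (∃ ξ : Bnd I, V ξ = .inl x) ∧ A = cyl x}

/-- The iterated sequence `(Vₙ)ₙ` of an AST `V`:  `V₀ = 0` and
`V_{n+1}(ξ) = Vₙ(ξ)·V(ξ − Vₙ(ξ))` if `Vₙ(ξ) ∈ M`, `V_{n+1}(ξ) = ξ` otherwise. -/
noncomputable def iter {I : S → S → Prop} (V : Bnd I → MB I) : ℕ → Bnd I → MB I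
  | 0, _ => .inl 1
  | n + 1, ξ =>
    match iter V n ξ with
    | .inl x =>
      match V (subB ξ x) with
      | .inl y => .inl (x * y)
      | .inr ζ => .inr (concB x ζ)
    | .inr _ => .inr ξ

/-- The increment `Δ_{n+1} = V ∘ θ_{Vₙ}` (junk value outside the domain of `θ_{Vₙ}`). -/
noncomputable def Delta {I : S → S → Prop} (V : Bnd I → MB I) (n : ℕ) (ξ : Bnd I) : MB I :=
  match iter V n ξ with
  | .inl x => V (subB ξ x)
  | .inr _ => .inr ξ

/-- The length of an element of `M̄`, with `|ξ| = ∞` for `ξ ∈ ∂M`. -/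
noncomputable def lenE {I : S → S → Prop} : MB I → ℝ≥0∞
  | .inl x => (len x : ℝ≥0∞)
  | .inr _ => ⊤

/-- `E|V| < ∞`. -/
noncomputable def EVfin {I : S → S → Prop} (P : Measure (Bnd I)) (V : Bnd I → MB I) : Prop :=
  ∫⁻ ξ, lenE (V ξ) ∂P < ⊤

/-- The AST `V` is exhaustive: it is `ℙ`-a.s. finite and `ℙ`-a.s. `ξ = ⋁ₙ Vₙ(ξ)`
(`ξ` is the least upper bound of its iterates). -/
noncomputable def Exhaustive {I : S → S → Prop} (P : Measure (Bnd I)) (V : Bnd I → MB I) : Prop :=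
  (∀ᵐ ξ ∂P, ∃ x : Heap I, V ξ = .inl x) ∧
    ∀ᵐ ξ ∂P, (∀ n : ℕ, mLe (iter V n ξ) (.inr ξ)) ∧
      ∀ ζ : MB I, (∀ n : ℕ, mLe (iter V n ξ) ζ) → mLe (.inr ξ) ζ

/-- `ℙ` is a Bernoulli measure: a probability measure on `(∂M, 𝔉)` that is multiplicative
and positive on elementary cylinders. -/
noncomputable def IsBernoulli {I : S → S → Prop} (P : Measure (Bnd I)) : Prop :=
  IsProbabilityMeasure P ∧
    (∀ x y : Heap I, P (cyl (x * y)) = P (cyl x) * P (cyl y)) ∧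
    ∀ x : Heap I, 0 < P (cyl x)

/-- `ζ` is the greatest lower bound, within the complete lattice `L(ξ)`, of the set
`Hₐ(ξ)` of finite subheaps of `ξ` containing an occurrence of `a`:  this characterizes
the first hitting time of `a`. -/
noncomputable def IsHit {I : S → S → Prop} [DecidableEq S] (a : S) (ξ : Bnd I) (ζ : MB I) :
    Prop :=
  mLe ζ (.inr ξ) ∧
    (∀ x : Heap I, mLe (.inl x) (.inr ξ) → 0 < occ a x → mLe ζ (.inl x)) ∧
    ∀ η : MB I, mLe η (.inr ξ) →
      (∀ x : Heap I, mLe (.inl x) (.inr ξ) → 0 < occ a x → mLe η (.inl x)) → mLe η ζ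

/-- The first hitting time of the piece `a`. -/
noncomputable def hit {I : S → S → Prop} [DecidableEq S] (a : S) (ξ : Bnd I) : MB I :=
  letI := Classical.propDecidable (∃ ζ : MB I, IsHit a ξ ζ)
  if h : ∃ ζ : MB I, IsHit a ξ ζ then h.choose else .inr ξ

/-- A maximal clique: a maximal element of `(𝒞, ≤)`. -/
noncomputable def IsMaxCl {I : S → S → Prop} (γ : Cl I) : Prop :=
  ∀ δ : Cl I, hLe γ.heap δ.heap → δ.heap = γ.heap

/-- The AST cutting an infinite heap at the first occurrence of a maximal clique. -/
noncomputable def Vmax {I : S → S → Prop} (ξ : Bnd I) : MB I :=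
  letI := Classical.propDecidable
  if h : ∃ k : ℕ, IsMaxCl (ξ.1 k) then .inl (ppSeq ξ.1 (Nat.find h + 1)) else .inr ξ

/-- The ergodic mean `⟨φ, x⟩ / |x|` (junk value `0` on infinite heaps). -/
noncomputable def ratioC {I : S → S → Prop} (φ : S → ℝ) : MB I → ℝ
  | .inl x => pairing φ x / (len x : ℝ)
  | .inr _ => 0

/-- The ratio `φ(x)/|x|` for `φ` defined on heaps (junk value `0` on infinite heaps). -/
noncomputable def ratioH {I : S → S → Prop} (φ : Heap I → ℝ) : MB I → ℝ
  | .inl x => φ x / (len x : ℝ)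
  | .inr _ => 0

/-- The set `ℭ` of nonempty cliques. -/
def NCl (I : S → S → Prop) := {γ : Cl I // γ.1.Nonempty}

instance [Fintype S] (I : S → S → Prop) : Finite (Cl I) :=
  inferInstanceAs (Finite {s : Finset S // ∀ a ∈ s, ∀ b ∈ s, a ≠ b → I a b})

instance [Fintype S] (I : S → S → Prop) : Finite (NCl I) :=
  inferInstanceAs (Finite {γ : Cl I // γ.1.Nonempty})

/-- The valuation `f(x) = ℙ(↑x)` associated with `ℙ`. -/
noncomputable def fval {I : S → S → Prop} (P : Measure (Bnd I)) (x : Heap I) : ℝ :=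
  (P (cyl x)).toReal

open Classical in
/-- The Möbius transform `h` of the valuation `f` associated with `ℙ`. -/
noncomputable def mobius {I : S → S → Prop} (P : Measure (Bnd I)) (γ : Cl I) : ℝ :=
  ∑ᶠ γ' : Cl I,
    if hLe γ.heap γ'.heap then (-1 : ℝ) ^ (γ'.1.card - γ.1.card) * fval P γ'.heap else 0

open Classical in
/-- The normalization `g(γ) = Σ_{γ'∈ℭ, γ→γ'} h(γ')`. -/
noncomputable def gnorm {I : S → S → Prop} (P : Measure (Bnd I)) (γ : Cl I) : ℝ :=
  ∑ᶠ γ' : Cl I, if γ'.1.Nonempty ∧ Move γ γ' then mobius P γ' else 0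

open Classical in
/-- The transition matrix of the Markov chain of cliques. -/
noncomputable def Pmat {I : S → S → Prop} (P : Measure (Bnd I)) (γ γ' : Cl I) : ℝ :=
  if Move γ γ' then mobius P γ' / gnorm P γ else 0

/-- `π` is a stationary probability distribution, carried by the nonempty cliques, of the
Markov chain of cliques. -/
noncomputable def IsStationary {I : S → S → Prop} (P : Measure (Bnd I)) (π : Cl I → ℝ) :
    Prop :=
  (∀ γ : Cl I, 0 ≤ π γ) ∧ (π (emptyCl I) = 0) ∧ (∑ᶠ γ : Cl I, π γ = 1) ∧
    ∀ γ' : Cl I, π γ' = ∑ᶠ γ : Cl I, π γ * Pmat P γ γ'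

open Classical in
/-- The nonnegative matrix `B` on `ℭ×ℭ`: `B_{γ,γ'} = f(γ')` if `γ → γ'`, else `0`. -/
noncomputable def Bmat {I : S → S → Prop} (P : Measure (Bnd I)) :
    Matrix (NCl I) (NCl I) ℝ :=
  fun γ γ' => if Move γ.1 γ'.1 then fval P γ'.1.heap else 0

/-- The spectral radius of `B` (as a complex matrix). -/
noncomputable def specRadB [Fintype S] {I : S → S → Prop} (P : Measure (Bnd I)) : ℝ≥0∞ :=
  letI : Fintype (NCl I) := Fintype.ofFinite _
  letI : DecidableEq (NCl I) := Classical.decEq _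
  spectralRadius ℂ ((Bmat P).map (algebraMap ℝ ℂ))

/-- The height `τ(x)` of a heap: the number of cliques in its Cartier–Foata decomposition. -/
noncomputable def height {I : S → S → Prop} (x : Heap I) : ℕ :=
  sInf {N : ℕ | ∀ n, N ≤ n → cf I x n = emptyCl I}

/-- The ratio `|x|/τ(x)` (junk value `0` on infinite heaps). -/
noncomputable def speedRatio {I : S → S → Prop} : MB I → ℝ
  | .inl x => (len x : ℝ) / (height x : ℝ)
  | .inr _ => 0

/-- `ψ ∘ θ_V` extended by `0` outside the domain of `θ_V`. -/
noncomputable def extShift {I : S → S → Prop} (V : Bnd I → MB I) (ψ : Bnd I → ℝ)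
    (η : Bnd I) : ℝ :=
  match V η with
  | .inl _ => ψ (shiftV V η)
  | .inr _ => 0

-- ==== new stuff ====
variable {I : S → S → Prop}

/-- mk as a hom -/
def mkH (I : S → S → Prop) : FreeMonoid S →* Heap I := (HeapCon I).mk'

lemma mkH_surjective : Function.Surjective (mkH I) := Con.mk'_surjective

lemma addExt_mk {A : Type} [AddCommMonoid A] (φ : S → A) (w : FreeMonoid S) :
    addExt φ (mkH I w) = (w.toList.map φ).sum := by
  unfold addExt mkH
  refine Eq.trans (congrArg Multiplicative.toAdd (Con.lift_mk' _ w)) ?_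
  rw [FreeMonoid.lift_apply]
  induction w.toList with
  | nil => simp
  | cons c t ih => simp_all

lemma addExt_mul {A : Type} [AddCommMonoid A] (φ : S → A) (x y : Heap I) :
    addExt φ (x * y) = addExt φ x + addExt φ y := by
  unfold addExt
  exact congrArg Multiplicative.toAdd (map_mul _ x y)

set_option linter.unusedSectionVars false
variable [DecidableEq S]

lemma occ_mul (p : S) (x y : Heap I) : occ p (x * y) = occ p x + occ p y := addExt_mul _ x y

lemma len_mul (x y : Heap I) : len (x * y) = len x + len y := addExt_mul _ x y

lemma occ_mk (p : S) (w : FreeMonoid S) : occ p (mkH I w) = w.toList.count p := by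
  unfold occ
  rw [addExt_mk]
  induction w.toList with
  | nil => simp
  | cons c t ih =>
      simp only [List.map_cons, List.sum_cons, List.count_cons, ih]
      by_cases h : c = p <;> simp [h, Nat.add_comm]

lemma len_mk (w : FreeMonoid S) : len (mkH I w) = w.toList.length := by
  unfold len
  rw [addExt_mk]
  simp [List.map_const']


/-- single-letter heap commutation -/
lemma comm_heap {b c : S} (h : I b c) :
    mkH I (FreeMonoid.of b) * mkH I (FreeMonoid.of c)
      = mkH I (FreeMonoid.of c) * mkH I (FreeMonoid.of b) := by
  rw [← map_mul, ← map_mul]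
  exact (Con.eq _).mpr (ConGen.Rel.of _ _ ⟨b, c, h, rfl, rfl⟩)

/-- the filtering endomorphism of the free monoid keeping only letters p, q -/
def filt (p q : S) : FreeMonoid S →* FreeMonoid S where
  toFun w := FreeMonoid.ofList (w.toList.filter (fun e => e = p || e = q))
  map_one' := rfl
  map_mul' x y := by
    show FreeMonoid.ofList ((x.toList ++ y.toList).filter _) = _
    rw [List.filter_append, FreeMonoid.ofList_append]

lemma filt_toList (p q : S) (w : FreeMonoid S) :
    (filt p q w).toList = w.toList.filter (fun e => e = p || e = q) := rfl

/-- the projection homomorphism on the heap monoid, for a dependent pair -/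
def projH (hsymm : ∀ a b : S, I a b → I b a) (hirr : ∀ a : S, ¬ I a a)
    (p q : S) (hpq : ¬ I p q) : Heap I →* FreeMonoid S :=
  Con.lift (HeapCon I) (filt p q) (Con.conGen_le.mpr (by
    rintro w₁ w₂ ⟨e, f, hef, rfl, rfl⟩
    refine (Con.ker_rel _).mpr ?_
    have hne : e ≠ f := fun h => hirr e (h ▸ hef)
    apply FreeMonoid.toList.injective
    rw [filt_toList, filt_toList]
    show List.filter _ [e, f] = List.filter _ [f, e]
    by_cases he : (e = p ∨ e = q) <;> by_cases hf : (f = p ∨ f = q)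
    · exfalso
      rcases he with rfl | rfl <;> rcases hf with rfl | rfl
      · exact hne rfl
      · exact hpq hef
      · exact hpq (hsymm _ _ hef)
      · exact hne rfl
    · have he' : (e = p || e = q) = true := by simpa using he
      have hf' : (f = p || f = q) = false := by simpa using hf
      simp [he', hf']
    · have he' : (e = p || e = q) = false := by simpa using he
      have hf' : (f = p || f = q) = true := by simpa using hf
      simp [he', hf']
    · have he' : (e = p || e = q) = false := by simpa using he
      have hf' : (f = p || f = q) = false := by simpa using hf
      simp [he', hf']))

lemma projH_mk (hsymm : ∀ a b : S, I a b → I b a) (hirr : ∀ a : S, ¬ I a a)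
    (p q : S) (hpq : ¬ I p q) (w : FreeMonoid S) :
    projH hsymm hirr p q hpq (mkH I w) = filt p q w :=
  Con.lift_mk' _ w


/-- number of `p`'s in `w` before the `(m+1)`-th occurrence of `q` -/
def pB (p q : S) : ℕ → List S → ℕ
  | _, [] => 0
  | m, c :: t =>
    if c = q then (match m with | 0 => 0 | m + 1 => pB p q m t)
    else (if c = p then 1 + pB p q m t else pB p q m t)

lemma pB_nil (p q : S) (m : ℕ) : pB p q m [] = 0 := rfl

lemma pB_cons_q_zero (p q : S) (t : List S) : pB p q 0 (q :: t) = 0 := by simp [pB]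

lemma pB_cons_q_succ (p q : S) (m : ℕ) (t : List S) :
    pB p q (m + 1) (q :: t) = pB p q m t := by simp [pB]

lemma pB_cons_p (p q : S) (hne : p ≠ q) (m : ℕ) (t : List S) :
    pB p q m (p :: t) = 1 + pB p q m t := by simp [pB, hne]

lemma pB_cons_other (p q c : S) (hcp : c ≠ p) (hcq : c ≠ q) (m : ℕ) (t : List S) :
    pB p q m (c :: t) = pB p q m t := by simp [pB, hcp, hcq]

lemma pB_split (p q : S) (hne : p ≠ q) :
    ∀ (A C : List S), pB p q (A.count q) (A ++ C) = A.count p + pB p q 0 C := by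
  intro A
  induction A with
  | nil => intro C; simp
  | cons c A ih =>
    intro C
    rcases eq_or_ne c q with rfl | hq
    · rw [List.count_cons_self, List.cons_append, pB_cons_q_succ, ih,
        List.count_cons_of_ne hne.symm]
    · rcases eq_or_ne c p with rfl | hp
      · rw [List.cons_append, List.count_cons_of_ne hq,
          pB_cons_p c q hq, ih, List.count_cons_self]
        omega
      · rw [List.cons_append, List.count_cons_of_ne hq,
          pB_cons_other p q c hp hq, ih, List.count_cons_of_ne hp]

lemma pB_zero_append (p q : S) (E : List S) (hq : q ∈ E) :
    ∀ U, pB p q 0 (E ++ U) = pB p q 0 E := by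
  induction E with
  | nil => cases hq
  | cons c E ih =>
    intro U
    rcases eq_or_ne c q with rfl | hcq
    · rw [List.cons_append, pB_cons_q_zero, pB_cons_q_zero]
    · have hq' : q ∈ E := by
        rcases List.mem_cons.mp hq with h | h
        · exact absurd h.symm hcq
        · exact h
      rcases eq_or_ne c p with rfl | hcp
      · rw [List.cons_append, pB_cons_p c q hcq, pB_cons_p c q hcq, ih hq' U]
      · rw [List.cons_append, pB_cons_other p q c hcp hcq, pB_cons_other p q c hcp hcq, ih hq' U]

/-- key word lemma: two prefixes with the same `q`-count followed by the same
`q`-containing block have the same `p`-count. -/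
lemma count_eq_of_eq_append (p q : S) (hne : p ≠ q) (A B E U V : List S)
    (h : A ++ (E ++ U) = B ++ (E ++ V)) (hcq : A.count q = B.count q) (hqE : q ∈ E) :
    A.count p = B.count p := by
  have h1 : pB p q (A.count q) (A ++ (E ++ U)) = A.count p + pB p q 0 (E ++ U) :=
    pB_split p q hne A (E ++ U)
  have h2 : pB p q (B.count q) (B ++ (E ++ V)) = B.count p + pB p q 0 (E ++ V) :=
    pB_split p q hne B (E ++ V)
  rw [h, hcq] at h1
  rw [pB_zero_append p q E hqE U] at h1
  rw [pB_zero_append p q E hqE V] at h2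
  omega


variable (hsymm : ∀ a b : S, I a b → I b a) (hirr : ∀ a : S, ¬ I a a)

lemma count_projH (p q : S) (hpq : ¬ I p q) (r : S) (hr : r = p ∨ r = q) (x : Heap I) :
    ((projH hsymm hirr p q hpq x).toList).count r = occ r x := by
  obtain ⟨w, rfl⟩ := mkH_surjective (I := I) x
  rw [projH_mk, occ_mk, filt_toList]
  exact List.count_filter (by rcases hr with rfl | rfl <;> simp)

lemma length_projH (p q : S) (hpq : ¬ I p q) (hne : p ≠ q) (x : Heap I) :
    ((projH hsymm hirr p q hpq x).toList).length = occ p x + occ q x := by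
  obtain ⟨w, rfl⟩ := mkH_surjective (I := I) x
  rw [projH_mk, occ_mk, occ_mk, filt_toList]
  induction w.toList with
  | nil => simp
  | cons c t ih =>
    by_cases hp : c = p <;> by_cases hq : c = q
    · exact absurd (hp.symm.trans hq) hne
    · simp [List.filter_cons, List.count_cons, ih, hp, hq, hne]
      omega
    · simp [List.filter_cons, List.count_cons, ih, hp, hq, (show ¬ q = p from fun h => hne h.symm)]
      omega
    · simp [List.filter_cons, List.count_cons, ih, hp, hq]

include hsymm hirr in
/-- equal Parikh vectors for the two `a`-free prefixes. -/
lemma parikh_eq (hconn : ∀ a b : S, Relation.ReflTransGen (fun x y : S => x ≠ y ∧ ¬ I x y) a b)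
    {a : S} {x y u v : Heap I} (dw : FreeMonoid S)
    (hall : ∀ s : S, s ∈ dw.toList)
    (heq : x * (mkH I dw * u) = y * (mkH I dw * v))
    (hxa : occ a x = 0) (hya : occ a y = 0) :
    ∀ p, occ p x = occ p y := by
  intro p
  refine Relation.ReflTransGen.head_induction_on (motive := fun p' _ => occ p' x = occ p' y)
    (hconn p a) (hxa.trans hya.symm) ?_
  rintro p' c ⟨hne, hdep⟩ _ ih
  set π := projH hsymm hirr p' c hdep with hπ
  have happ : (π x).toList ++ ((π (mkH I dw)).toList ++ (π u).toList)
      = (π y).toList ++ ((π (mkH I dw)).toList ++ (π v).toList) := by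
    have := congrArg (fun z => (π z).toList) heq
    simpa [map_mul, FreeMonoid.toList_mul] using this
  have hqE : c ∈ (π (mkH I dw)).toList := by
    rw [hπ, projH_mk, filt_toList]
    refine List.mem_filter.mpr ⟨hall c, by simp⟩
  have hcq : ((π x).toList).count c = ((π y).toList).count c := by
    rw [count_projH hsymm hirr p' c hdep c (Or.inr rfl) x,
      count_projH hsymm hirr p' c hdep c (Or.inr rfl) y, ih]
  have := count_eq_of_eq_append p' c hne _ _ _ _ _ happ hcq hqE
  rwa [count_projH hsymm hirr p' c hdep p' (Or.inl rfl) x,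
    count_projH hsymm hirr p' c hdep p' (Or.inl rfl) y] at this

include hsymm hirr in
/-- the two `a`-free prefixes have equal projections. -/
lemma proj_eq_of_parikh {x y u' v' : Heap I}
    (heq : x * u' = y * v') (hocc : ∀ p, occ p x = occ p y)
    (p q : S) (hpq : ¬ I p q) (hne : p ≠ q) :
    projH hsymm hirr p q hpq x = projH hsymm hirr p q hpq y := by
  set π := projH hsymm hirr p q hpq with hπ
  have happ : (π x).toList ++ (π u').toList = (π y).toList ++ (π v').toList := by
    have := congrArg (fun z => (π z).toList) heq
    simpa [map_mul, FreeMonoid.toList_mul] using this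
  have hlen : ((π x).toList).length = ((π y).toList).length := by
    rw [length_projH hsymm hirr p q hpq hne x, length_projH hsymm hirr p q hpq hne y,
      hocc p, hocc q]
  have := (List.append_inj happ hlen).1
  exact FreeMonoid.toList.injective this


lemma mk_cons (c : S) (t : List S) :
    mkH I (FreeMonoid.ofList (c :: t))
      = mkH I (FreeMonoid.of c) * mkH I (FreeMonoid.ofList t) := by
  rw [← map_mul]; rfl

include hsymm hirr in
lemma minimal_of_heads (b : S) :
    ∀ (w : List S), 0 < w.count b →
    (∀ (q : S) (hq : ¬ I b q), b ≠ q →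
      ∃ t', (projH hsymm hirr b q hq (mkH I (FreeMonoid.ofList w))).toList = b :: t') →
    ∃ y', mkH I (FreeMonoid.ofList w) = mkH I (FreeMonoid.of b) * y' := by
  intro w
  induction w with
  | nil => intro h; simp at h
  | cons c t ih =>
    intro hcount hheads
    rcases eq_or_ne c b with rfl | hcb
    · exact ⟨mkH I (FreeMonoid.ofList t), mk_cons c t⟩
    · by_cases hdep : I b c
      · -- independent letter in front: strip it
        have hcount' : 0 < t.count b := by
          have : (c :: t).count b = t.count b := List.count_cons_of_ne hcb
          omega
        have hheads' : ∀ (q : S) (hq : ¬ I b q), b ≠ q →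
            ∃ t', (projH hsymm hirr b q hq (mkH I (FreeMonoid.ofList t))).toList = b :: t' := by
          intro q hq hbq
          obtain ⟨t', ht'⟩ := hheads q hq hbq
          refine ⟨t', ?_⟩
          rw [projH_mk, filt_toList] at ht' ⊢
          have hcq : c ≠ q := fun h => hq (h ▸ hdep)
          rw [show FreeMonoid.toList (FreeMonoid.ofList (c :: t)) = c :: t from rfl,
            List.filter_cons] at ht'
          rw [if_neg (by simp [hcb, hcq])] at ht'
          exact ht'
        obtain ⟨y₂, hy₂⟩ := ih hcount' hheads'
        refine ⟨mkH I (FreeMonoid.of c) * y₂, ?_⟩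
        calc mkH I (FreeMonoid.ofList (c :: t))
            = mkH I (FreeMonoid.of c) * mkH I (FreeMonoid.ofList t) := mk_cons c t
          _ = mkH I (FreeMonoid.of c) * (mkH I (FreeMonoid.of b) * y₂) := by rw [hy₂]
          _ = (mkH I (FreeMonoid.of c) * mkH I (FreeMonoid.of b)) * y₂ :=
              (mul_assoc _ _ _).symm
          _ = (mkH I (FreeMonoid.of b) * mkH I (FreeMonoid.of c)) * y₂ := by
              rw [comm_heap (hsymm b c hdep)]
          _ = mkH I (FreeMonoid.of b) * (mkH I (FreeMonoid.of c) * y₂) := mul_assoc _ _ _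
      · -- dependent letter in front: contradiction
        exfalso
        obtain ⟨t', ht'⟩ := hheads c hdep (fun h => hcb h.symm)
        rw [projH_mk, filt_toList,
          show FreeMonoid.toList (FreeMonoid.ofList (c :: t)) = c :: t from rfl,
          List.filter_cons, if_pos (by simp)] at ht'
        exact hcb (List.cons_eq_cons.mp ht').1

include hsymm hirr in
lemma recon_aux : ∀ (wx : List S) (y : Heap I),
    (∀ p, occ p (mkH I (FreeMonoid.ofList wx)) = occ p y) →
    (∀ (p q : S) (hpq : ¬ I p q), p ≠ q →
       projH hsymm hirr p q hpq (mkH I (FreeMonoid.ofList wx))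
         = projH hsymm hirr p q hpq y) →
    mkH I (FreeMonoid.ofList wx) = y := by
  intro wx
  induction wx with
  | nil =>
    intro y hocc hproj
    obtain ⟨wy, rfl⟩ := mkH_surjective (I := I) y
    cases hwy : wy.toList with
    | nil =>
      have : wy = FreeMonoid.ofList [] := FreeMonoid.toList.injective hwy
      rw [this]
    | cons c twy =>
      exfalso
      have := hocc c
      rw [occ_mk, occ_mk, hwy] at this
      simp [List.count_cons] at this
  | cons b wx' ih =>
    intro y hocc hproj
    obtain ⟨wy, rfl⟩ := mkH_surjective (I := I) y
    have hcount : 0 < wy.toList.count b := by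
      have := hocc b
      rw [occ_mk, occ_mk] at this
      rw [← this]
      simp [show FreeMonoid.toList (FreeMonoid.ofList (b :: wx')) = b :: wx' from rfl,
        List.count_cons]
    have hwy' : wy = FreeMonoid.ofList wy.toList := rfl
    have hheads : ∀ (q : S) (hq : ¬ I b q), b ≠ q →
        ∃ t', (projH hsymm hirr b q hq (mkH I (FreeMonoid.ofList wy.toList))).toList
          = b :: t' := by
      intro q hq hbq
      have := (hproj b q hq hbq).symm
      refine ⟨(filt b q (FreeMonoid.ofList wx')).toList, ?_⟩
      show FreeMonoid.toList ((projH hsymm hirr b q hq) ((mkH I) wy)) = _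
      rw [this, projH_mk, filt_toList,
        show FreeMonoid.toList (FreeMonoid.ofList (b :: wx')) = b :: wx' from rfl,
        List.filter_cons, if_pos (by simp)]
      rfl
    obtain ⟨y', hy'⟩ := minimal_of_heads hsymm hirr b wy.toList hcount hheads
    have hx : mkH I (FreeMonoid.ofList (b :: wx'))
        = mkH I (FreeMonoid.of b) * mkH I (FreeMonoid.ofList wx') := mk_cons b wx'
    rw [hwy', hy', hx]
    congr 1
    refine ih y' (fun p => ?_) (fun p q hpq hne => ?_)
    · have := hocc p
      rw [hx, occ_mul, hwy', hy', occ_mul] at this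
      omega
    · have := hproj p q hpq hne
      rw [hx, map_mul, hwy', hy', map_mul] at this
      exact mul_left_cancel this

include hsymm hirr in
lemma heap_eq_of_proj (x y : Heap I) (hocc : ∀ p, occ p x = occ p y)
    (hproj : ∀ (p q : S) (hpq : ¬ I p q), p ≠ q →
      projH hsymm hirr p q hpq x = projH hsymm hirr p q hpq y) : x = y := by
  obtain ⟨wx, rfl⟩ := mkH_surjective (I := I) x
  exact recon_aux hsymm hirr wx.toList y (by simpa using hocc) (by simpa using hproj)

include hsymm hirr in
/-- the core cancellation lemma: `a`-free prefixes before a full block are determined. -/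
lemma prefix_determined
    (hconn : ∀ a b : S, Relation.ReflTransGen (fun x y : S => x ≠ y ∧ ¬ I x y) a b)
    {a : S} {x y u v : Heap I} (dw : FreeMonoid S) (hall : ∀ s : S, s ∈ dw.toList)
    (heq : x * (mkH I dw * u) = y * (mkH I dw * v))
    (hxa : occ a x = 0) (hya : occ a y = 0) : x = y := by
  have hocc := parikh_eq hsymm hirr hconn dw hall heq hxa hya
  exact heap_eq_of_proj hsymm hirr x y hocc
    (fun p q hpq hne => proj_eq_of_parikh hsymm hirr heq hocc p q hpq hne)


-- ===== cylinder and measure lemmas =====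

lemma cf_spec (hCF : ∀ x : Heap I, ∃! c : ℕ → Cl I, CFprop I c x) (x : Heap I) :
    CFprop I (cf I x) x := by
  have he : ∃ c, CFprop I c x := (hCF x).exists
  unfold cf
  rw [dif_pos he]
  exact he.choose_spec

include hsymm hirr in
lemma cyl_disjoint
    (hconn : ∀ a b : S, Relation.ReflTransGen (fun x y : S => x ≠ y ∧ ¬ I x y) a b)
    (hCF : ∀ x : Heap I, ∃! c : ℕ → Cl I, CFprop I c x)
    {a : S} {x y : Heap I} (hxa : occ a x = 0) (hya : occ a y = 0) (hxy : x ≠ y)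
    (dw : FreeMonoid S) (hall : ∀ s : S, s ∈ dw.toList) :
    Disjoint (cyl (x * mkH I dw)) (cyl (y * mkH I dw)) := by
  rw [Set.disjoint_left]
  intro ξ h1 h2
  obtain ⟨-, N₁, hN₁⟩ := cf_spec hCF (x * mkH I dw)
  obtain ⟨-, N₂, hN₂⟩ := cf_spec hCF (y * mkH I dw)
  have h1' := h1 (max N₁ N₂)
  have h2' := h2 (max N₁ N₂)
  have e1 : pp (.inl (x * mkH I dw)) (max N₁ N₂) = x * mkH I dw :=
    (hN₁ _ (le_max_left _ _)).1
  have e2 : pp (.inl (y * mkH I dw)) (max N₁ N₂) = y * mkH I dw :=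
    (hN₂ _ (le_max_right _ _)).1
  rw [e1] at h1'
  rw [e2] at h2'
  obtain ⟨u, hu⟩ := h1'
  obtain ⟨v, hv⟩ := h2'
  have heq : x * (mkH I dw * u) = y * (mkH I dw * v) := by
    rw [← mul_assoc, ← mul_assoc, ← hu, ← hv]
  exact hxy (prefix_determined hsymm hirr hconn dw hall heq hxa hya)

lemma measurableSet_cyl (x : Heap I) : MeasurableSet (cyl x) :=
  MeasurableSpace.measurableSet_generateFrom ⟨x, rfl⟩

instance [Countable S] : Countable (Heap I) :=
  haveI : Countable (FreeMonoid S) := inferInstanceAs (Countable (List S))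
  inferInstanceAs (Countable (Quotient (HeapCon I).toSetoid))

include hsymm hirr in
lemma tsum_cyl_lt_top [Fintype S]
    (hconn : ∀ a b : S, Relation.ReflTransGen (fun x y : S => x ≠ y ∧ ¬ I x y) a b)
    (hCF : ∀ x : Heap I, ∃! c : ℕ → Cl I, CFprop I c x)
    (P : Measure (Bnd I)) (hP : IsBernoulli P) (a : S) :
    (∑' x : {x : Heap I // occ a x = 0}, P (cyl x.1)) < ⊤ := by
  classical
  haveI : IsProbabilityMeasure P := hP.1
  set dw : FreeMonoid S := FreeMonoid.ofList (Finset.univ.toList (α := S)) with hdw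
  have hall : ∀ s : S, s ∈ dw.toList := fun s => Finset.mem_toList.mpr (Finset.mem_univ s)
  set δ : Heap I := mkH I dw with hδ
  have hdisj : Pairwise (Function.onFun Disjoint
      (fun x : {x : Heap I // occ a x = 0} => cyl (x.1 * δ))) := by
    intro x y hxy
    exact cyl_disjoint hsymm hirr hconn hCF x.2 y.2
      (fun h => hxy (Subtype.ext h)) dw hall
  have hmeas : ∀ x : {x : Heap I // occ a x = 0}, MeasurableSet (cyl (x.1 * δ)) :=
    fun x => measurableSet_cyl _
  have hsum : (∑' x : {x : Heap I // occ a x = 0}, P (cyl (x.1 * δ))) ≤ 1 := by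
    rw [← measure_iUnion hdisj hmeas]
    exact prob_le_one
  have hprod : ∀ x : {x : Heap I // occ a x = 0},
      P (cyl (x.1 * δ)) = P (cyl x.1) * P (cyl δ) := fun x => hP.2.1 x.1 δ
  rw [tsum_congr hprod, ENNReal.tsum_mul_right] at hsum
  have hpos : P (cyl δ) ≠ 0 := (hP.2.2 δ).ne'
  have := (ENNReal.le_div_iff_mul_le (Or.inl hpos) (Or.inl (measure_ne_top P _))).mpr hsum
  exact lt_of_le_of_lt this (ENNReal.div_lt_top ENNReal.one_ne_top hpos)

-- ===== splitting / counting lemmas =====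

/-- canonical three-way split of a heap at positions `i ≤ m` -/
noncomputable def rep (x : Heap I) : FreeMonoid S := Function.surjInv (mkH_surjective (I := I)) x

lemma mk_rep (x : Heap I) : mkH I (rep x) = x := Function.surjInv_eq _ x

noncomputable def part1 (x : Heap I) (i : ℕ) : Heap I :=
  mkH I (FreeMonoid.ofList ((rep x).toList.take i))

noncomputable def part2 (x : Heap I) (i m : ℕ) : Heap I :=
  mkH I (FreeMonoid.ofList (((rep x).toList.drop i).take (m - i)))

noncomputable def part3 (x : Heap I) (m : ℕ) : Heap I :=
  mkH I (FreeMonoid.ofList ((rep x).toList.drop m))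

lemma parts_mul (x : Heap I) (i m : ℕ) (him : i ≤ m) :
    part1 x i * (part2 x i m * part3 x m) = x := by
  unfold part1 part2 part3
  rw [← map_mul, ← map_mul, ← FreeMonoid.ofList_append, ← FreeMonoid.ofList_append]
  have h3 : ((rep x).toList.drop i).drop (m - i) = (rep x).toList.drop m := by
    rw [List.drop_drop]
    congr 1
    omega
  rw [← h3, List.take_append_drop, List.take_append_drop]
  exact mk_rep x

lemma len_rep (x : Heap I) : (rep x).toList.length = len x := by
  conv_rhs => rw [← mk_rep x]
  rw [len_mk]

lemma len_part1 (x : Heap I) (i : ℕ) (hi : i ≤ len x) : len (part1 x i) = i := by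
  unfold part1
  rw [len_mk]
  show ((rep x).toList.take i).length = i
  rw [List.length_take, len_rep]
  omega

lemma len_part12 (x : Heap I) (i m : ℕ) (him : i ≤ m) (hm : m ≤ len x) :
    len (part1 x i * part2 x i m) = m := by
  rw [len_mul, len_part1 x i (le_trans him hm)]
  unfold part2
  rw [len_mk]
  show i + (((rep x).toList.drop i).take (m - i)).length = m
  rw [List.length_take, List.length_drop, len_rep]
  omega

include hsymm hirr in
lemma parts_occ_zero {a : S} {x : Heap I} (hx : occ a x = 0) (i m : ℕ) (him : i ≤ m) :
    occ a (part1 x i) = 0 ∧ occ a (part2 x i m) = 0 ∧ occ a (part3 x m) = 0 := by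
  have := parts_mul (I := I) x i m him
  have h := congrArg (occ a) this
  rw [occ_mul, occ_mul, hx] at h
  omega

theorem series_over_submonoid_finite
    {S : Type} [Fintype S] [DecidableEq S] (I : S → S → Prop)
    (hsymm : ∀ a b : S, I a b → I b a)
    (hirr : ∀ a : S, ¬ I a a)
    (hconn : ∀ a b : S, Relation.ReflTransGen (fun x y : S => x ≠ y ∧ ¬ I x y) a b)
    (hcard : 1 < Fintype.card S)
    (hCF : ∀ x : Heap I, ∃! c : ℕ → Cl I, CFprop I c x)
    (P : Measure (Bnd I)) (hP : IsBernoulli P)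
    (a : S) :
    (∑' x : {x : Heap I // occ a x = 0}, P (cyl x.1)) < ⊤ ∧
    (∑' x : {x : Heap I // occ a x = 0}, (len x.1 : ℝ≥0∞) * P (cyl x.1)) < ⊤ ∧
    (∑' x : {x : Heap I // occ a x = 0}, (len x.1 : ℝ≥0∞) ^ 2 * P (cyl x.1)) < ⊤ := by
  classical
  have hT : (∑' x : {x : Heap I // occ a x = 0}, P (cyl x.1)) < ⊤ :=
    tsum_cyl_lt_top hsymm hirr hconn hCF P hP a
  set M := {x : Heap I // occ a x = 0} with hM
  set F : Heap I → ℝ≥0∞ := fun x => P (cyl x) with hF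
  set T : ℝ≥0∞ := ∑' x : M, F x.1 with hTdef
  have hTne : T ≠ ⊤ := hT.ne
  -- `k`-value for the splitting
  set k : Heap I → ℕ := fun x => (len x - 1) / 2 with hk
  have hk_le : ∀ x : Heap I, k x ≤ len x := by intro x; simp only [hk]; omega
  have hk2 : ∀ x : Heap I, 1 ≤ len x → 2 * k x + 1 ≤ len x := by
    intro x h; simp only [hk]; omega
  have hn2k : ∀ x : Heap I, len x ≤ 2 * (k x + 1) := by intro x; simp only [hk]; omega
  -- the splitting map
  set Ψ : (Σ x : M, Fin (k x.1 + 1) × Fin (k x.1 + 1)) → M × M × M := fun d =>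
    (⟨part1 d.1.1 d.2.1.1,
        (parts_occ_zero hsymm hirr d.1.2 d.2.1.1 (k d.1.1 + 1 + d.2.2.1)
          (by have := d.2.1.2; omega)).1⟩,
     ⟨part2 d.1.1 d.2.1.1 (k d.1.1 + 1 + d.2.2.1),
        (parts_occ_zero hsymm hirr d.1.2 d.2.1.1 (k d.1.1 + 1 + d.2.2.1)
          (by have := d.2.1.2; omega)).2.1⟩,
     ⟨part3 d.1.1 (k d.1.1 + 1 + d.2.2.1),
        (parts_occ_zero hsymm hirr d.1.2 d.2.1.1 (k d.1.1 + 1 + d.2.2.1)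
          (by have := d.2.1.2; omega)).2.2⟩) with hΨ
  have hΨmul : ∀ d : (Σ x : M, Fin (k x.1 + 1) × Fin (k x.1 + 1)),
      (Ψ d).1.1 * ((Ψ d).2.1.1 * (Ψ d).2.2.1) = d.1.1 := by
    rintro ⟨⟨x, hx⟩, i, j⟩
    exact parts_mul x i.1 (k x + 1 + j.1) (by have h : i.1 < k x + 1 := i.2; omega)
  -- injectivity
  have hΨinj : Function.Injective Ψ := by
    rintro ⟨⟨x, hx⟩, i, j⟩ ⟨⟨x', hx'⟩, i', j'⟩ h
    have h1 : part1 x i.1 = part1 x' i'.1 := congrArg (fun t => t.1.1) h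
    have h2 : part2 x i.1 (k x + 1 + j.1) = part2 x' i'.1 (k x' + 1 + j'.1) :=
      congrArg (fun t => t.2.1.1) h
    have h3 : part3 x (k x + 1 + j.1) = part3 x' (k x' + 1 + j'.1) :=
      congrArg (fun t => t.2.2.1) h
    have hxx : x = x' := by
      have e1 := hΨmul ⟨⟨x, hx⟩, i, j⟩
      have e2 := hΨmul ⟨⟨x', hx'⟩, i', j'⟩
      simp only [hΨ] at e1 e2
      rw [← e1, ← e2, h1, h2, h3]
    subst hxx
    have hii : i.1 = i'.1 := by
      rcases Nat.eq_zero_or_pos (len x) with h0 | h0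
      · have e1 : i.1 < k x + 1 := i.2
        have e2 : i'.1 < k x + 1 := i'.2
        simp only [hk] at e1 e2
        omega
      · have l1 : len (part1 x i.1) = i.1 :=
          len_part1 x i.1 (by have e1 : i.1 < k x + 1 := i.2; have := hk2 x h0; omega)
        have l2 : len (part1 x i'.1) = i'.1 :=
          len_part1 x i'.1 (by have e1 : i'.1 < k x + 1 := i'.2; have := hk2 x h0; omega)
        rw [← l1, ← l2, h1]
    have hjj : j.1 = j'.1 := by
      rcases Nat.eq_zero_or_pos (len x) with h0 | h0
      · have e1 : j.1 < k x + 1 := j.2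
        have e2 : j'.1 < k x + 1 := j'.2
        simp only [hk] at e1 e2
        omega
      · have l1 : len (part1 x i.1 * part2 x i.1 (k x + 1 + j.1)) = k x + 1 + j.1 :=
          len_part12 x i.1 (k x + 1 + j.1) (by have e1 : i.1 < k x + 1 := i.2; omega)
            (by have e1 : j.1 < k x + 1 := j.2; have := hk2 x h0; omega)
        have l2 : len (part1 x i'.1 * part2 x i'.1 (k x + 1 + j'.1)) = k x + 1 + j'.1 :=
          len_part12 x i'.1 (k x + 1 + j'.1) (by have e1 : i'.1 < k x + 1 := i'.2; omega)
            (by have e1 : j'.1 < k x + 1 := j'.2; have := hk2 x h0; omega)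
        rw [← h1, ← h2] at l2
        rw [l1] at l2
        omega
    have : i = i' := Fin.ext hii
    subst this
    have : j = j' := Fin.ext hjj
    subst this
    rfl
  -- value identity
  have hΨval : ∀ d : (Σ x : M, Fin (k x.1 + 1) × Fin (k x.1 + 1)),
      F d.1.1 = F (Ψ d).1.1 * (F (Ψ d).2.1.1 * F (Ψ d).2.2.1) := by
    intro d
    conv_lhs => rw [← hΨmul d]
    simp only [hF]
    rw [hP.2.1, hP.2.1]
  -- the triple sum is T³
  have htriple : (∑' t : M × M × M, F t.1.1 * (F t.2.1.1 * F t.2.2.1)) = T * (T * T) := by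
    rw [ENNReal.tsum_prod']
    have : ∀ x : M, (∑' t : M × M, F x.1 * (F t.1.1 * F t.2.1)) = F x.1 * (T * T) := by
      intro x
      rw [ENNReal.tsum_mul_left]
      congr 1
      rw [ENNReal.tsum_prod']
      have : ∀ y : M, (∑' z : M, F y.1 * F z.1) = F y.1 * T := fun y =>
        ENNReal.tsum_mul_left
      rw [tsum_congr this, ENNReal.tsum_mul_right]
    rw [tsum_congr this, ENNReal.tsum_mul_right]
  -- the sigma sum
  have hsigma : (∑' d : (Σ x : M, Fin (k x.1 + 1) × Fin (k x.1 + 1)), F d.1.1)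
      ≤ T * (T * T) := by
    calc (∑' d : (Σ x : M, Fin (k x.1 + 1) × Fin (k x.1 + 1)), F d.1.1)
        = ∑' d : (Σ x : M, Fin (k x.1 + 1) × Fin (k x.1 + 1)),
            F (Ψ d).1.1 * (F (Ψ d).2.1.1 * F (Ψ d).2.2.1) := tsum_congr hΨval
      _ ≤ ∑' t : M × M × M, F t.1.1 * (F t.2.1.1 * F t.2.2.1) :=
          ENNReal.tsum_comp_le_tsum_of_injective hΨinj _
      _ = T * (T * T) := htriple
  -- computing the sigma sum fiberwise
  have hfiber : (∑' d : (Σ x : M, Fin (k x.1 + 1) × Fin (k x.1 + 1)), F d.1.1)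
      = ∑' x : M, ((k x.1 + 1) * (k x.1 + 1) : ℕ) * F x.1 := by
    rw [ENNReal.tsum_sigma']
    refine tsum_congr fun x => ?_
    rw [tsum_fintype]
    simp [Finset.sum_const, mul_comm]
  -- the squared sum
  have hsq : (∑' x : M, (len x.1 : ℝ≥0∞) ^ 2 * F x.1) ≤ 4 * (T * (T * T)) := by
    have hpt : ∀ x : M, (len x.1 : ℝ≥0∞) ^ 2 * F x.1
        ≤ 4 * (((k x.1 + 1) * (k x.1 + 1) : ℕ) * F x.1) := by
      intro x
      rw [← mul_assoc]
      refine mul_le_mul_left ?_ _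
      have hnat : (len x.1) ^ 2 ≤ 4 * ((k x.1 + 1) * (k x.1 + 1)) := by
        have := hn2k x.1
        nlinarith [this]
      calc (len x.1 : ℝ≥0∞) ^ 2 = ((len x.1 ^ 2 : ℕ) : ℝ≥0∞) := by push_cast; ring
        _ ≤ ((4 * ((k x.1 + 1) * (k x.1 + 1)) : ℕ) : ℝ≥0∞) := by
            exact_mod_cast Nat.cast_le.mpr hnat
        _ = 4 * (((k x.1 + 1) * (k x.1 + 1) : ℕ) : ℝ≥0∞) := by push_cast; ring
    calc (∑' x : M, (len x.1 : ℝ≥0∞) ^ 2 * F x.1)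
        ≤ ∑' x : M, 4 * (((k x.1 + 1) * (k x.1 + 1) : ℕ) * F x.1) := Summable.tsum_le_tsum hpt
          ENNReal.summable ENNReal.summable
      _ = 4 * ∑' x : M, (((k x.1 + 1) * (k x.1 + 1) : ℕ) : ℝ≥0∞) * F x.1 :=
          ENNReal.tsum_mul_left
      _ = 4 * ∑' d : (Σ x : M, Fin (k x.1 + 1) × Fin (k x.1 + 1)), F d.1.1 := by rw [hfiber]
      _ ≤ 4 * (T * (T * T)) := mul_le_mul_right hsigma _
  have hfin : (4 : ℝ≥0∞) * (T * (T * T)) ≠ ⊤ :=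
    ENNReal.mul_ne_top (ENNReal.ofNat_ne_top)
      (ENNReal.mul_ne_top hTne (ENNReal.mul_ne_top hTne hTne))
  have hsqlt : (∑' x : M, (len x.1 : ℝ≥0∞) ^ 2 * F x.1) < ⊤ :=
    lt_of_le_of_lt hsq (lt_top_iff_ne_top.mpr hfin)
  refine ⟨hT, ?_, hsqlt⟩
  -- linear sum from squared sum
  have hlin : (∑' x : M, (len x.1 : ℝ≥0∞) * F x.1)
      ≤ (∑' x : M, (len x.1 : ℝ≥0∞) ^ 2 * F x.1) + T := by
    rw [← ENNReal.tsum_add]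
    refine Summable.tsum_le_tsum (fun x => ?_) ENNReal.summable ENNReal.summable
    have hc : (len x.1 : ℝ≥0∞) ≤ (len x.1 : ℝ≥0∞) ^ 2 + 1 := by
      calc (len x.1 : ℝ≥0∞) = ((len x.1 : ℕ) : ℝ≥0∞) := rfl
        _ ≤ ((len x.1 ^ 2 + 1 : ℕ) : ℝ≥0∞) := by
            refine Nat.cast_le.mpr ?_
            rcases Nat.eq_zero_or_pos (len x.1) with h | h
            · simp [h]
            · nlinarith [h]
        _ = (len x.1 : ℝ≥0∞) ^ 2 + 1 := by push_cast; ring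
    calc (len x.1 : ℝ≥0∞) * F x.1
        ≤ ((len x.1 : ℝ≥0∞) ^ 2 + 1) * F x.1 := mul_le_mul_left hc _
      _ = (len x.1 : ℝ≥0∞) ^ 2 * F x.1 + F x.1 := by ring
  exact lt_of_le_of_lt hlin (ENNReal.add_lt_top.mpr ⟨hsqlt, hT⟩)

end HeapPaper
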